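/- Let H be a connected four-cycle free graph and μ an ergodic shift-invariant measure on X_H such that for some coordinate direction e_k, the slope sl_{e_k}(x) = lim_n (1/n) h_x(0, n e_k) equals 1 almost everywhere. Then h_x(i, i + m e_k) = m for all i ∈ Z^d and m ∈ N, μ-almost everywhere. -/

import Mathlib

open Filter MeasureTheory

abbrev Zd (d : ℕ) := Fin d → ℤ

def adjZ {d : ℕ} (i j : Zd d) : Prop := (∑ k, (i k - j k).natAbs) = 1

def homShift (d : ℕ) {V : Type*} (H : SimpleGraph V) : Set (Zd d → V) :=
  {x | ∀ i j : Zd d, adjZ i j → H.Adj (x i) (x j)}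

def FourCycleFree {V : Type*} (H : SimpleGraph V) : Prop :=
  ∀ a b c e : V, H.Adj a b → H.Adj b c → H.Adj c e → H.Adj e a → a = c ∨ b = e

def IsGraphCovering {W V : Type*} (T : SimpleGraph W) (H : SimpleGraph V)
    (p : W → V) : Prop :=
  (∀ a b : W, T.Adj a b → H.Adj (p a) (p b)) ∧
    ∀ w : W, Set.BijOn p (T.neighborSet w) (H.neighborSet (p w))

def unitVec (d : ℕ) (j : Fin d) : Zd d := fun k => if k = j then 1 else 0

def shiftZd (d : ℕ) {A : Type*} (v : Zd d) (x : Zd d → A) : Zd d → A :=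
  fun i => x (i + v)

section Aux

variable {d : ℕ} {W V : Type*} {H : SimpleGraph V} {T : SimpleGraph W} {p : W → V}

lemma adjZ_step (i : Zd d) (c : Fin d) {s : ℤ} (hs : s = 1 ∨ s = -1) :
    adjZ i (i + s • unitVec d c) := by
  unfold adjZ
  have hterm : ∀ m : Fin d, (i m - (i + s • unitVec d c) m).natAbs
      = if m = c then 1 else 0 := by
    intro m
    simp only [Pi.add_apply, Pi.smul_apply, unitVec, smul_eq_mul]
    rcases hs with h | h <;> subst h <;> by_cases hm : m = c <;> simp [hm]
  rw [Finset.sum_congr rfl fun m _ => hterm m]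
  simp

lemma homShift_step {x : Zd d → V} (hx : x ∈ homShift d H) (i : Zd d) (c : Fin d)
    {s : ℤ} (hs : s = 1 ∨ s = -1) : H.Adj (x i) (x (i + s • unitVec d c)) :=
  hx i _ (adjZ_step i c hs)

lemma homShift_step1 {x : Zd d → V} (hx : x ∈ homShift d H) (i : Zd d) (c : Fin d) :
    H.Adj (x i) (x (i + unitVec d c)) := by
  have := homShift_step hx i c (Or.inl rfl)
  rwa [one_smul] at this

lemma adjZ_shift {i j : Zd d} (v : Zd d) (hij : adjZ i j) : adjZ (i + v) (j + v) := by
  unfold adjZ at *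
  have : ∀ c : Fin d, ((i + v) c - (j + v) c) = i c - j c := by
    intro c; simp only [Pi.add_apply]; ring
  rw [Finset.sum_congr rfl fun c _ => by rw [this c]]
  exact hij

lemma shift_mem {A : Type*} {G : SimpleGraph A} {x : Zd d → A}
    (hx : x ∈ homShift d G) (v : Zd d) : shiftZd d v x ∈ homShift d G :=
  fun i j hij => hx (i + v) (j + v) (adjZ_shift v hij)

open scoped Classical in
noncomputable def nxt (hp : IsGraphCovering T H p) (w : W) (v : V) : W :=
  if h : H.Adj (p w) v then
    ((Set.mem_image _ _ _).mp ((hp.2 w).2.2 (by simpa using h))).choose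
  else w

open scoped Classical in
lemma nxt_adj (hp : IsGraphCovering T H p) {w : W} {v : V} (h : H.Adj (p w) v) :
    T.Adj w (nxt hp w v) := by
  rw [nxt, dif_pos h]
  have := ((Set.mem_image _ _ _).mp ((hp.2 w).2.2 (by simpa using h))).choose_spec.1
  simpa using this

open scoped Classical in
lemma p_nxt (hp : IsGraphCovering T H p) {w : W} {v : V} (h : H.Adj (p w) v) :
    p (nxt hp w v) = v := by
  rw [nxt, dif_pos h]
  exact ((Set.mem_image _ _ _).mp ((hp.2 w).2.2 (by simpa using h))).choose_spec.2

lemma nxt_eq (hp : IsGraphCovering T H p) {w u : W} {v : V}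
    (ha : T.Adj w u) (hu : p u = v) : nxt hp w v = u := by
  have hadj : H.Adj (p w) v := hu ▸ hp.1 w u ha
  exact (hp.2 w).2.1 (by simpa using nxt_adj hp hadj) (by simpa using ha)
    (by rw [p_nxt hp hadj, hu])

lemma nxt_square (hp : IsGraphCovering T H p) (h4 : FourCycleFree H)
    {w : W} {v1 v2 u : V} (h1 : H.Adj (p w) v1) (h2 : H.Adj v1 u)
    (h3 : H.Adj (p w) v2) (h4' : H.Adj v2 u) :
    nxt hp (nxt hp w v1) u = nxt hp (nxt hp w v2) u := by
  rcases h4 (p w) v1 u v2 h1 h2 h4'.symm h3.symm with he | he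
  · have e1 : nxt hp (nxt hp w v1) u = w := nxt_eq hp (nxt_adj hp h1).symm he
    have e2 : nxt hp (nxt hp w v2) u = w := nxt_eq hp (nxt_adj hp h3).symm he
    rw [e1, e2]
  · rw [he]

lemma cov_surj (hp : IsGraphCovering T H p) (hTc : T.Connected)
    (hconn : H.Connected) (v : V) : ∃ w, p w = v := by
  obtain ⟨w0⟩ := hTc.nonempty
  have key : ∀ {u v' : V} (_ : H.Walk u v') (w : W), p w = u → ∃ w', p w' = v' := by
    intro u v' q
    induction q with
    | nil => exact fun w hw => ⟨w, hw⟩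
    | cons ha _ ih =>
      intro w hw
      exact ih (nxt hp w _) (p_nxt hp (by rw [hw]; exact ha))
  exact key ((hconn.preconnected (p w0) v).some) w0 rfl

end Aux
section Lift

variable {d : ℕ} {W V : Type*} {H : SimpleGraph V} {T : SimpleGraph W} {p : W → V}

def Nsum (i : Zd d) : ℕ := ∑ c, (i c).natAbs

def bmax [NeZero d] (i : Zd d) : Fin d :=
  ((Finset.univ.filter fun a => i a ≠ 0).max).getD ⟨0, Nat.pos_of_ne_zero (NeZero.ne d)⟩

lemma bmax_spec [NeZero d] {i : Zd d} (hi : i ≠ 0) :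
    i (bmax i) ≠ 0 ∧ ∀ c, bmax i < c → i c = 0 := by
  have hex : ∃ a, i a ≠ 0 := by
    by_contra hc; push_neg at hc; exact hi (funext hc)
  obtain ⟨a0, ha0⟩ := hex
  have hne : (Finset.univ.filter fun a => i a ≠ 0).Nonempty :=
    ⟨a0, by simp [ha0]⟩
  obtain ⟨b, hb⟩ := Finset.max_of_nonempty hne
  have hbm : bmax i = b := by rw [bmax, hb]; rfl
  constructor
  · have := Finset.mem_of_max hb
    rw [hbm]; simpa using this
  · intro c hc
    by_contra hc0
    have hcmem : c ∈ Finset.univ.filter fun a => i a ≠ 0 := by simp [hc0]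
    have hle := Finset.le_max hcmem
    rw [hb] at hle
    exact absurd (WithBot.coe_le_coe.mp hle) (not_le.mpr (hbm ▸ hc))

lemma bmax_eq [NeZero d] {i : Zd d} {b : Fin d} (h1 : i b ≠ 0)
    (h2 : ∀ c, b < c → i c = 0) : bmax i = b := by
  have hi : i ≠ 0 := fun h => h1 (by rw [h]; rfl)
  obtain ⟨h3, h4⟩ := bmax_spec hi
  rcases lt_trichotomy (bmax i) b with hlt | he | hgt
  · exact absurd (h4 b hlt) h1
  · exact he
  · exact absurd (h2 _ hgt) h3

def predZ [NeZero d] (i : Zd d) : Zd d :=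
  Function.update i (bmax i) (i (bmax i) - Int.sign (i (bmax i)))

lemma predZ_apply_bmax [NeZero d] (i : Zd d) :
    predZ i (bmax i) = i (bmax i) - (i (bmax i)).sign :=
  Function.update_self _ _ _

lemma predZ_apply_ne [NeZero d] {i : Zd d} {c : Fin d} (hc : c ≠ bmax i) :
    predZ i c = i c :=
  Function.update_of_ne hc _ _

lemma sign_pm {z : ℤ} (hz : z ≠ 0) : z.sign = 1 ∨ z.sign = -1 := by
  rcases lt_trichotomy z 0 with h | h | h
  · exact Or.inr (Int.sign_eq_neg_one_of_neg h)
  · exact absurd h hz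
  · exact Or.inl (Int.sign_eq_one_of_pos h)

lemma natAbs_sub_sign {z : ℤ} (hz : z ≠ 0) : (z - z.sign).natAbs + 1 = z.natAbs := by
  rcases lt_trichotomy z 0 with h | h | h
  · rw [Int.sign_eq_neg_one_of_neg h]; omega
  · exact absurd h hz
  · rw [Int.sign_eq_one_of_pos h]; omega

lemma predZ_add [NeZero d] {i : Zd d} (hi : i ≠ 0) :
    predZ i + (i (bmax i)).sign • unitVec d (bmax i) = i := by
  funext c
  by_cases hc : c = bmax i
  · subst hc
    simp [predZ, unitVec, Function.update_self]
  · simp [predZ, unitVec, Function.update_of_ne hc, hc]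

lemma Nsum_predZ [NeZero d] {i : Zd d} (hi : i ≠ 0) : Nsum (predZ i) + 1 = Nsum i := by
  have hb := (bmax_spec hi).1
  unfold Nsum
  rw [← Finset.add_sum_erase _ (fun c => ((predZ i) c).natAbs) (Finset.mem_univ (bmax i)),
    ← Finset.add_sum_erase _ (fun c => (i c).natAbs) (Finset.mem_univ (bmax i))]
  have he : ∀ c ∈ Finset.univ.erase (bmax i),
      ((predZ i) c).natAbs = (i c).natAbs := by
    intro c hc
    rw [predZ, Function.update_of_ne (Finset.ne_of_mem_erase hc)]
  rw [Finset.sum_congr rfl he]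
  have h1 : (predZ i) (bmax i) = i (bmax i) - (i (bmax i)).sign := by
    rw [predZ, Function.update_self]
  rw [h1]
  have := natAbs_sub_sign hb
  omega

noncomputable def liftZ [NeZero d] (hp : IsGraphCovering T H p) (w0 : W)
    (x : Zd d → V) (i : Zd d) : W :=
  if h : i = 0 then w0 else nxt hp (liftZ hp w0 x (predZ i)) (x i)
termination_by Nsum i
decreasing_by
  have := Nsum_predZ h
  omega

variable [NeZero d]

lemma liftZ_zero (hp : IsGraphCovering T H p) (w0 : W) (x : Zd d → V) :
    liftZ hp w0 x 0 = w0 := by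
  rw [liftZ]; simp

lemma liftZ_ne (hp : IsGraphCovering T H p) (w0 : W) (x : Zd d → V) {i : Zd d}
    (hi : i ≠ 0) : liftZ hp w0 x i = nxt hp (liftZ hp w0 x (predZ i)) (x i) := by
  rw [liftZ]; simp [hi]

lemma pred_adj {x : Zd d → V} (hx : x ∈ homShift d H) {i : Zd d} (hi : i ≠ 0) :
    H.Adj (x (predZ i)) (x i) := by
  have := homShift_step hx (predZ i) (bmax i) (sign_pm (bmax_spec hi).1)
  rwa [predZ_add hi] at this

lemma p_liftZ (hp : IsGraphCovering T H p) {w0 : W} {x : Zd d → V}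
    (hx : x ∈ homShift d H) (hw0 : p w0 = x 0) :
    ∀ i, p (liftZ hp w0 x i) = x i := by
  suffices key : ∀ n i, Nsum i = n → p (liftZ hp w0 x i) = x i from fun i => key _ i rfl
  intro n
  induction n using Nat.strong_induction_on with
  | _ n ih =>
    intro i hi
    by_cases h0 : i = 0
    · subst h0; rw [liftZ_zero]; exact hw0
    · rw [liftZ_ne hp w0 x h0]
      have hpred : p (liftZ hp w0 x (predZ i)) = x (predZ i) :=
        ih _ (by have := Nsum_predZ h0; omega) _ rfl
      exact p_nxt hp (by rw [hpred]; exact pred_adj hx h0)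

end Lift
section Coherent

variable {d : ℕ} {W V : Type*} {H : SimpleGraph V} {T : SimpleGraph W} {p : W → V}
variable [NeZero d]

def Msum (a : Fin d) (i : Zd d) : ℕ :=
  ∑ c ∈ Finset.univ.filter (a < ·), (i c).natAbs

lemma coherent (hp : IsGraphCovering T H p) (h4 : FourCycleFree H)
    {x : Zd d → V} (hx : x ∈ homShift d H) {w0 : W} (hw0 : p w0 = x 0) (a : Fin d) :
    ∀ i : Zd d, liftZ hp w0 x (i + unitVec d a)
      = nxt hp (liftZ hp w0 x i) (x (i + unitVec d a)) := by
  suffices key : ∀ n i, Msum a i = n → liftZ hp w0 x (i + unitVec d a)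
      = nxt hp (liftZ hp w0 x i) (x (i + unitVec d a)) from fun i => key _ i rfl
  intro n
  induction n using Nat.strong_induction_on with
  | _ n ih =>
  intro i hMi
  by_cases hz : ∀ c, a < c → i c = 0
  · by_cases hneg : i a < 0
    · -- i a < 0 : predZ i = i + e_a, backtracking case
      have hia : i a ≠ 0 := hneg.ne
      have hi0 : i ≠ 0 := fun h => hia (by rw [h]; rfl)
      have hb : bmax i = a := bmax_eq hia hz
      have hsgn : (i a).sign = -1 := Int.sign_eq_neg_one_of_neg hneg
      have hpred : predZ i = i + unitVec d a := by
        funext c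
        by_cases hc : c = a
        · have hcb : c = bmax i := by rw [hb, hc]
          rw [hcb, predZ_apply_bmax, hb, hsgn, Pi.add_apply]
          simp [unitVec]
        · have hcb : c ≠ bmax i := by rw [hb]; exact hc
          rw [predZ_apply_ne hcb, Pi.add_apply]
          simp [unitVec, hc]
      have hpl : p (liftZ hp w0 x (i + unitVec d a)) = x (i + unitVec d a) :=
        p_liftZ hp hx hw0 _
      have hadj : H.Adj (x (i + unitVec d a)) (x i) := by
        have := homShift_step hx (i + unitVec d a) a (Or.inr rfl)
        have he : i + unitVec d a + (-1 : ℤ) • unitVec d a = i := by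
          funext c; simp [unitVec]
        rwa [he] at this
      rw [liftZ_ne hp w0 x hi0, hpred]
      symm
      exact nxt_eq hp (nxt_adj hp (by rw [hpl]; exact hadj)).symm hpl
    · -- i a ≥ 0 : predZ (i + e_a) = i, direct unfolding
      push_neg at hneg
      have h1 : (i + unitVec d a) a = i a + 1 := by simp [unitVec]
      have hner : (i + unitVec d a) ≠ 0 := by
        intro h
        have := congrFun h a
        rw [h1] at this
        simp at this
        omega
      have hbm : bmax (i + unitVec d a) = a := by
        refine bmax_eq (by rw [h1]; omega) (fun c hc => ?_)
        have hca : c ≠ a := hc.ne'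
        simp [unitVec, hca, hz c hc]
      have hsgn : ((i + unitVec d a) a).sign = 1 := by
        rw [h1]; exact Int.sign_eq_one_of_pos (by omega)
      have hpred : predZ (i + unitVec d a) = i := by
        funext c
        by_cases hc : c = a
        · have hcb : c = bmax (i + unitVec d a) := by rw [hbm, hc]
          have hsgn' : (i a + 1).sign = 1 := Int.sign_eq_one_of_pos (by omega)
          rw [hcb, predZ_apply_bmax, hbm, h1, hsgn']
          omega
        · have hcb : c ≠ bmax (i + unitVec d a) := by rw [hbm]; exact hc
          rw [predZ_apply_ne hcb, Pi.add_apply]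
          simp [unitVec, hc]
      rw [liftZ_ne hp w0 x hner, hpred]
  · -- there is a nonzero coordinate beyond a : square case
    push_neg at hz
    obtain ⟨c0, hc0lt, hc0⟩ := hz
    have hi0 : i ≠ 0 := fun h => hc0 (by rw [h]; rfl)
    have hbs := bmax_spec hi0
    have hab : a < bmax i := by
      by_contra hle
      push_neg at hle
      exact hc0 (hbs.2 c0 (lt_of_le_of_lt hle hc0lt))
    have hba : bmax i ≠ a := hab.ne'
    have hs : (i (bmax i)).sign = 1 ∨ (i (bmax i)).sign = -1 := sign_pm hbs.1
    have hval : (i + unitVec d a) (bmax i) = i (bmax i) := by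
      simp [unitVec, hba]
    have hne' : i + unitVec d a ≠ 0 := by
      intro h
      have := congrFun h (bmax i)
      rw [hval] at this
      exact hbs.1 this
    have hb' : bmax (i + unitVec d a) = bmax i := by
      refine bmax_eq (by rw [hval]; exact hbs.1) (fun c hc => ?_)
      have hca : c ≠ a := (lt_trans hab hc).ne'
      simp [unitVec, hca, hbs.2 c hc]
    have hpred' : predZ (i + unitVec d a) = predZ i + unitVec d a := by
      funext c
      by_cases hc : c = bmax i
      · have hcb : c = bmax (i + unitVec d a) := by rw [hb', hc]
        rw [hcb, predZ_apply_bmax, hb', Pi.add_apply]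
        rw [Pi.add_apply, predZ_apply_bmax]
        simp [unitVec, hba]
      · have hcb : c ≠ bmax (i + unitVec d a) := by rw [hb']; exact hc
        rw [predZ_apply_ne hcb, Pi.add_apply]
        rw [Pi.add_apply, predZ_apply_ne hc]
    have hMa : Msum a (predZ i) + 1 = Msum a i := by
      have hmem : bmax i ∈ Finset.univ.filter (a < ·) := by simp [hab]
      unfold Msum
      rw [← Finset.add_sum_erase _ (fun c => ((predZ i) c).natAbs) hmem,
        ← Finset.add_sum_erase _ (fun c => (i c).natAbs) hmem]
      have he : ∀ c ∈ (Finset.univ.filter (a < ·)).erase (bmax i),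
          ((predZ i) c).natAbs = (i c).natAbs := by
        intro c hc
        rw [predZ, Function.update_of_ne (Finset.ne_of_mem_erase hc)]
      rw [Finset.sum_congr rfl he]
      have h1 : (predZ i) (bmax i) = i (bmax i) - (i (bmax i)).sign := by
        rw [predZ, Function.update_self]
      rw [h1]
      have := natAbs_sub_sign hbs.1
      omega
    have IH := ih (Msum a (predZ i)) (by omega) (predZ i) rfl
    have hpi : p (liftZ hp w0 x (predZ i)) = x (predZ i) := p_liftZ hp hx hw0 _
    rw [liftZ_ne hp w0 x hne', hpred', IH, liftZ_ne hp w0 x hi0]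
    apply nxt_square hp h4
    · rw [hpi]; exact homShift_step1 hx (predZ i) a
    · have := homShift_step hx (predZ i + unitVec d a) (bmax i) hs
      have he : predZ i + unitVec d a + (i (bmax i)).sign • unitVec d (bmax i)
          = i + unitVec d a := by
        rw [add_right_comm, predZ_add hi0]
      rwa [he] at this
    · rw [hpi]
      have := homShift_step hx (predZ i) (bmax i) hs
      rwa [predZ_add hi0] at this
    · exact homShift_step1 hx i a

end Coherent
section Mem

variable {d : ℕ} {W V : Type*} {H : SimpleGraph V} {T : SimpleGraph W} {p : W → V}

lemma adjZ_cases {i j : Zd d} (hij : adjZ i j) :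
    ∃ c : Fin d, j = i + unitVec d c ∨ i = j + unitVec d c := by
  unfold adjZ at hij
  have hex : ∃ c, (i c - j c).natAbs ≠ 0 := by
    by_contra hc
    push_neg at hc
    rw [Finset.sum_eq_zero (fun c _ => hc c)] at hij
    omega
  obtain ⟨c, hc⟩ := hex
  have h1 : (i c - j c).natAbs = 1 := by
    have hle : (i c - j c).natAbs ≤ 1 := by
      calc (i c - j c).natAbs ≤ ∑ m, (i m - j m).natAbs :=
            Finset.single_le_sum (f := fun m => (i m - j m).natAbs)
              (fun m _ => Nat.zero_le _) (Finset.mem_univ c)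
        _ = 1 := hij
    omega
  have h0 : ∀ b, b ≠ c → (i b - j b).natAbs = 0 := by
    intro b hb
    have hle : (i c - j c).natAbs + (i b - j b).natAbs ≤ 1 := by
      calc (i c - j c).natAbs + (i b - j b).natAbs
          = ∑ m ∈ ({c, b} : Finset (Fin d)), (i m - j m).natAbs :=
            (Finset.sum_pair (f := fun m => (i m - j m).natAbs) (Ne.symm hb)).symm
        _ ≤ ∑ m, (i m - j m).natAbs :=
            Finset.sum_le_sum_of_subset (Finset.subset_univ _)
        _ = 1 := hij
    omega
  refine ⟨c, ?_⟩
  rcases Int.natAbs_eq_iff.mp h1 with he | he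
  · right
    funext b
    by_cases hb : b = c
    · rw [hb]; simp only [Pi.add_apply, unitVec]; simp; omega
    · have := h0 b hb
      simp only [Pi.add_apply, unitVec, if_neg hb]; omega
  · left
    funext b
    by_cases hb : b = c
    · rw [hb]; simp only [Pi.add_apply, unitVec]; simp; omega
    · have := h0 b hb
      simp only [Pi.add_apply, unitVec, if_neg hb]; omega

variable [NeZero d]

lemma liftZ_mem (hp : IsGraphCovering T H p) (h4 : FourCycleFree H)
    {x : Zd d → V} (hx : x ∈ homShift d H) {w0 : W} (hw0 : p w0 = x 0) :
    liftZ hp w0 x ∈ homShift d T := by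
  intro i j hij
  obtain ⟨c, hcase⟩ := adjZ_cases hij
  rcases hcase with h | h
  · rw [h, coherent hp h4 hx hw0 c i]
    exact nxt_adj hp (by rw [p_liftZ hp hx hw0]; exact homShift_step1 hx i c)
  · rw [h, coherent hp h4 hx hw0 c j]
    exact (nxt_adj hp (by rw [p_liftZ hp hx hw0]; exact homShift_step1 hx j c)).symm

end Mem

section Line

variable {d : ℕ} {W V : Type*} {H : SimpleGraph V} {T : SimpleGraph W} {p : W → V}

noncomputable def pick0 (hp : IsGraphCovering T H p) (hTc : T.Connected)
    (hc : H.Connected) (v : V) : W :=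
  (cov_surj hp hTc hc v).choose

lemma pick0_spec (hp : IsGraphCovering T H p) (hTc : T.Connected)
    (hc : H.Connected) (v : V) : p (pick0 hp hTc hc v) = v :=
  (cov_surj hp hTc hc v).choose_spec

noncomputable def lineLift (hp : IsGraphCovering T H p) (hTc : T.Connected)
    (hc : H.Connected) (c : ℕ → V) : ℕ → W
  | 0 => pick0 hp hTc hc (c 0)
  | n + 1 => nxt hp (lineLift hp hTc hc c n) (c (n + 1))

lemma lineLift_congr (hp : IsGraphCovering T H p) (hTc : T.Connected)
    (hc : H.Connected) (c c' : ℕ → V) :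
    ∀ m, (∀ j ≤ m, c j = c' j) →
      lineLift hp hTc hc c m = lineLift hp hTc hc c' m := by
  intro m
  induction m with
  | zero => intro hcc; simp [lineLift, hcc 0 le_rfl]
  | succ n ihn =>
    intro hcc
    simp only [lineLift]
    rw [ihn (fun j hj => hcc j (hj.trans (Nat.le_succ n))), hcc (n+1) le_rfl]

lemma dist_nxt (hp : IsGraphCovering T H p) (w : W) (v : V) :
    T.dist w (nxt hp w v) ≤ 1 := by
  by_cases hA : H.Adj (p w) v
  · exact le_of_eq (SimpleGraph.dist_eq_one_iff_adj.mpr (nxt_adj hp hA))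
  · rw [nxt, dif_neg hA, SimpleGraph.dist_self]
    omega

lemma dist_lineLift (hp : IsGraphCovering T H p) (hTc : T.Connected)
    (hc : H.Connected) (c : ℕ → V) :
    ∀ m, T.dist (pick0 hp hTc hc (c 0)) (lineLift hp hTc hc c m) ≤ m := by
  intro m
  induction m with
  | zero => simp [lineLift, SimpleGraph.dist_self]
  | succ n ihn =>
    calc T.dist (pick0 hp hTc hc (c 0)) (lineLift hp hTc hc c (n+1))
        ≤ T.dist (pick0 hp hTc hc (c 0)) (lineLift hp hTc hc c n)
          + T.dist (lineLift hp hTc hc c n) (lineLift hp hTc hc c (n+1)) :=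
          hTc.dist_triangle
      _ ≤ n + 1 := by
          have h2 : T.dist (lineLift hp hTc hc c n) (lineLift hp hTc hc c (n+1)) ≤ 1 :=
            dist_nxt hp _ _
          omega

noncomputable def FmDef (hp : IsGraphCovering T H p) (hTc : T.Connected)
    (hc : H.Connected) (k : Fin d) (m : ℕ) (x : Zd d → V) : ℕ :=
  T.dist (pick0 hp hTc hc (x 0))
    (lineLift hp hTc hc (fun j => x (j • unitVec d k)) m)

lemma FmDef_le (hp : IsGraphCovering T H p) (hTc : T.Connected)
    (hc : H.Connected) (k : Fin d) (m : ℕ) (x : Zd d → V) :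
    FmDef hp hTc hc k m x ≤ m := by
  have := dist_lineLift hp hTc hc (fun j => x (j • unitVec d k)) m
  have h0 : ((0 : ℕ) • unitVec d k) = (0 : Zd d) := zero_nsmul _
  unfold FmDef
  rw [show x 0 = x ((0:ℕ) • unitVec d k) by rw [h0]]
  exact this

lemma FmDef_measurable [Fintype V] [MeasurableSpace V] [DiscreteMeasurableSpace V]
    (hp : IsGraphCovering T H p) (hTc : T.Connected)
    (hc : H.Connected) (k : Fin d) (m : ℕ) :
    Measurable (FmDef hp hTc hc k m) := by
  classical
  have hfact : FmDef hp hTc hc k m =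
      (fun c : Fin (m+1) → V =>
        T.dist (pick0 hp hTc hc (c 0))
          (lineLift hp hTc hc (fun j => c ⟨min j m, by omega⟩) m))
      ∘ (fun (x : Zd d → V) (j : Fin (m+1)) => x ((j : ℕ) • unitVec d k)) := by
    funext x
    simp only [Function.comp]
    unfold FmDef
    have hl : lineLift hp hTc hc (fun j => x (j • unitVec d k)) m
        = lineLift hp hTc hc
          (fun j => x (((min j m : ℕ)) • unitVec d k)) m := by
      apply lineLift_congr
      intro j hj
      rw [min_eq_left hj]
    rw [hl]
    simp [zero_nsmul]
  rw [hfact]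
  exact Measurable.of_discrete.comp
    (measurable_pi_lambda _ fun j => measurable_pi_apply _)

end Line
section Bridge

variable {d : ℕ} {W V : Type*} {H : SimpleGraph V} {T : SimpleGraph W} {p : W → V}
variable [NeZero d]

lemma liftZ_lineLift (hp : IsGraphCovering T H p) (h4 : FourCycleFree H)
    (hTc : T.Connected) (hc : H.Connected) {x : Zd d → V}
    (hx : x ∈ homShift d H) (k : Fin d) :
    ∀ m : ℕ, liftZ hp (pick0 hp hTc hc (x 0)) x (m • unitVec d k)
      = lineLift hp hTc hc (fun j => x (j • unitVec d k)) m := by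
  have hw0 : p (pick0 hp hTc hc (x 0)) = x 0 := pick0_spec hp hTc hc (x 0)
  intro m
  induction m with
  | zero =>
    rw [zero_nsmul, liftZ_zero]
    simp [lineLift, zero_nsmul]
  | succ n ihn =>
    have hstep : (n + 1) • unitVec d k = n • unitVec d k + unitVec d k :=
      succ_nsmul _ _
    rw [hstep, coherent hp h4 hx hw0 k _, ihn]
    simp only [lineLift]
    rw [← hstep]

variable {h : (Zd d → V) → Zd d → Zd d → ℕ}

lemma FmDef_eq (hp : IsGraphCovering T H p) (h4 : FourCycleFree H)
    (hTc : T.Connected) (hc : H.Connected)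
    (hheight : ∀ x ∈ homShift d H, ∀ xt ∈ homShift d T,
      (∀ i, p (xt i) = x i) → ∀ i j : Zd d, h x i j = T.dist (xt i) (xt j))
    {x : Zd d → V} (hx : x ∈ homShift d H) (k : Fin d) (m : ℕ) :
    FmDef hp hTc hc k m x = h x 0 (m • unitVec d k) := by
  have hw0 : p (pick0 hp hTc hc (x 0)) = x 0 := pick0_spec hp hTc hc (x 0)
  rw [hheight x hx (liftZ hp (pick0 hp hTc hc (x 0)) x)
    (liftZ_mem hp h4 hx hw0) (p_liftZ hp hx hw0) 0 (m • unitVec d k)]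
  unfold FmDef
  rw [← liftZ_lineLift hp h4 hTc hc hx k m, liftZ_zero]

lemma h_shift_eq (hp : IsGraphCovering T H p) (h4 : FourCycleFree H)
    (hTc : T.Connected) (hc : H.Connected)
    (hheight : ∀ x ∈ homShift d H, ∀ xt ∈ homShift d T,
      (∀ i, p (xt i) = x i) → ∀ i j : Zd d, h x i j = T.dist (xt i) (xt j))
    {x : Zd d → V} (hx : x ∈ homShift d H) (k : Fin d) (v : Zd d) (m : ℕ) :
    h x v (v + m • unitVec d k) = FmDef hp hTc hc k m (shiftZd d v x) := by
  have hxs : shiftZd d v x ∈ homShift d H := shift_mem hx v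
  rw [FmDef_eq hp h4 hTc hc hheight hxs k m]
  set w0 := pick0 hp hTc hc (x 0) with hw0def
  have hw0 : p w0 = x 0 := pick0_spec hp hTc hc (x 0)
  set xt := liftZ hp w0 x with hxt
  have hxtm : xt ∈ homShift d T := liftZ_mem hp h4 hx hw0
  have hxtp : ∀ i, p (xt i) = x i := p_liftZ hp hx hw0
  have hytm : (fun i => xt (i + v)) ∈ homShift d T :=
    fun i j hij => hxtm (i + v) (j + v) (adjZ_shift v hij)
  have hytp : ∀ i, p (xt (i + v)) = shiftZd d v x i := fun i => hxtp (i + v)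
  rw [hheight x hx xt hxtm hxtp v (v + m • unitVec d k),
    hheight (shiftZd d v x) hxs _ hytm hytp 0 (m • unitVec d k)]
  rw [zero_add, add_comm]

lemma h_subadd (hp : IsGraphCovering T H p) (h4 : FourCycleFree H)
    (hTc : T.Connected) (hc : H.Connected)
    (hheight : ∀ x ∈ homShift d H, ∀ xt ∈ homShift d T,
      (∀ i, p (xt i) = x i) → ∀ i j : Zd d, h x i j = T.dist (xt i) (xt j))
    {x : Zd d → V} (hx : x ∈ homShift d H) (k : Fin d) (m q : ℕ) :
    FmDef hp hTc hc k (q * m) x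
      ≤ ∑ j ∈ Finset.range q, FmDef hp hTc hc k m (shiftZd d ((j * m) • unitVec d k) x) := by
  have hterm : ∀ j : ℕ, FmDef hp hTc hc k m (shiftZd d ((j * m) • unitVec d k) x)
      = h x ((j * m) • unitVec d k) ((j * m) • unitVec d k + m • unitVec d k) :=
    fun j => (h_shift_eq hp h4 hTc hc hheight hx k _ m).symm
  rw [FmDef_eq hp h4 hTc hc hheight hx k (q * m),
    Finset.sum_congr rfl fun j _ => hterm j]
  set w0 := pick0 hp hTc hc (x 0) with hw0def
  have hw0 : p w0 = x 0 := pick0_spec hp hTc hc (x 0)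
  set xt := liftZ hp w0 x with hxt
  have hxtm : xt ∈ homShift d T := liftZ_mem hp h4 hx hw0
  have hxtp : ∀ i, p (xt i) = x i := p_liftZ hp hx hw0
  have hrw : ∀ i j : Zd d, h x i j = T.dist (xt i) (xt j) :=
    hheight x hx xt hxtm hxtp
  rw [hrw, Finset.sum_congr rfl fun j _ => hrw _ _]
  -- pure tree-metric chain bound
  induction q with
  | zero =>
    simp [zero_nsmul, SimpleGraph.dist_self]
  | succ n ihn =>
    have hsucc : ((n + 1) * m) • unitVec d k
        = (n * m) • unitVec d k + m • unitVec d k := by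
      rw [← add_nsmul]
      congr 1
      ring
    calc T.dist (xt 0) (xt (((n+1) * m) • unitVec d k))
        ≤ T.dist (xt 0) (xt ((n * m) • unitVec d k))
          + T.dist (xt ((n * m) • unitVec d k)) (xt (((n+1) * m) • unitVec d k)) :=
          hTc.dist_triangle
      _ ≤ _ := by
          rw [Finset.sum_range_succ, hsucc]
          exact Nat.add_le_add ihn le_rfl

end Bridge
/-- If for an ergodic shift-invariant measure `μ` on `X_H` the slope in direction
`e_k` equals `1` a.e., then the height rises deterministically:
`h_x(i, i + m e_k) = m` for all `i` and `m`, `μ`-a.e. -/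
theorem slope_one_heights_deterministic {d : ℕ} (hd : 2 ≤ d) {W V : Type*}
    [Fintype V] [MeasurableSpace V] [DiscreteMeasurableSpace V]
    {H : SimpleGraph V} (hconn : H.Connected) (h4 : FourCycleFree H)
    {T : SimpleGraph W} (hT : T.IsTree) (p : W → V) (hp : IsGraphCovering T H p)
    (h : (Zd d → V) → Zd d → Zd d → ℕ)
    (hheight : ∀ x ∈ homShift d H, ∀ xt ∈ homShift d T,
      (∀ i, p (xt i) = x i) → ∀ i j : Zd d, h x i j = T.dist (xt i) (xt j))
    (μ : Measure (Zd d → V)) [IsProbabilityMeasure μ]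
    (hX : μ (homShift d H) = 1)
    (hinv : ∀ v : Zd d, Measure.map (shiftZd d v) μ = μ)
    (herg : ∀ s : Set (Zd d → V), MeasurableSet s →
      (∀ v : Zd d, shiftZd d v ⁻¹' s = s) → μ s = 0 ∨ μ s = 1)
    (k : Fin d)
    (hslope : ∀ᵐ x ∂μ,
      Tendsto (fun n : ℕ => (h x 0 (n • unitVec d k) : ℝ) / n) atTop (nhds 1)) :
    ∀ᵐ x ∂μ, ∀ (i : Zd d) (m : ℕ), h x i (i + m • unitVec d k) = m := by
  classical
  haveI : NeZero d := ⟨by omega⟩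
  have hTc : T.Connected := hT.isConnected
  set F : ℕ → (Zd d → V) → ℕ := fun m x => FmDef hp hTc hconn k m x with hF
  have hFmeas : ∀ m, Measurable (F m) := fun m => FmDef_measurable hp hTc hconn k m
  have hFle : ∀ m x, F m x ≤ m := fun m x => FmDef_le hp hTc hconn k m x
  have hshift_meas : ∀ v : Zd d,
      Measurable (shiftZd d v : (Zd d → V) → (Zd d → V)) :=
    fun v => measurable_pi_lambda _ fun i => measurable_pi_apply _
  -- homShift is a measurable set of full measure
  have hHmeas : MeasurableSet (homShift d H) := by
    have hrepr : homShift d H = ⋂ (ij : Zd d × Zd d),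
        {x : Zd d → V | adjZ ij.1 ij.2 → H.Adj (x ij.1) (x ij.2)} := by
      ext x
      simp only [Set.mem_iInter, Set.mem_setOf_eq, homShift]
      exact ⟨fun hx ij => hx ij.1 ij.2, fun hx i j => hx (i, j)⟩
    rw [hrepr]
    refine MeasurableSet.iInter fun ij => ?_
    by_cases hij : adjZ ij.1 ij.2
    · have hset : {x : Zd d → V | adjZ ij.1 ij.2 → H.Adj (x ij.1) (x ij.2)}
          = (fun x : Zd d → V => (x ij.1, x ij.2)) ⁻¹' {q : V × V | H.Adj q.1 q.2} := by
        ext x; simp [hij]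
      rw [hset]
      exact ((measurable_pi_apply _).prodMk (measurable_pi_apply _))
        MeasurableSet.of_discrete
    · have hset : {x : Zd d → V | adjZ ij.1 ij.2 → H.Adj (x ij.1) (x ij.2)}
          = Set.univ := by
        ext x; simp [hij]
      rw [hset]; exact MeasurableSet.univ
  have haeH : ∀ᵐ x ∂μ, x ∈ homShift d H := by
    have hcompl : μ (homShift d H)ᶜ = 0 := by
      rw [measure_compl hHmeas (measure_ne_top μ _), hX, measure_univ]
      simp
    exact MeasureTheory.ae_iff.mpr hcompl
  have hFcastmeas : ∀ m, Measurable fun x => (F m x : ℝ) :=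
    fun m => Measurable.comp Measurable.of_discrete (hFmeas m)
  have hFint : ∀ m (v : Zd d),
      Integrable (fun x => (F m (shiftZd d v x) : ℝ)) μ := by
    intro m v
    refine Integrable.mono' (integrable_const (m : ℝ))
      ((hFcastmeas m).comp (hshift_meas v)).aestronglyMeasurable
      (Eventually.of_forall fun x => ?_)
    rw [Real.norm_natCast]
    exact_mod_cast hFle m _
  have hFint0 : ∀ m, Integrable (fun x => (F m x : ℝ)) μ := by
    intro m
    refine Integrable.mono' (integrable_const (m : ℝ))
      (hFcastmeas m).aestronglyMeasurable
      (Eventually.of_forall fun x => ?_)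
    rw [Real.norm_natCast]
    exact_mod_cast hFle m x
  -- dominated convergence towards the slope
  have hDCT : Tendsto (fun n : ℕ => ∫ x, ((F n x : ℝ) / n) ∂μ) atTop (nhds 1) := by
    have hlim : ∀ᵐ x ∂μ,
        Tendsto (fun n : ℕ => (F n x : ℝ) / n) atTop (nhds 1) := by
      refine (haeH.and hslope).mono fun x hx => ?_
      obtain ⟨hxH, hsx⟩ := hx
      have hfx : (fun n : ℕ => (F n x : ℝ) / n)
          = fun n : ℕ => (h x 0 (n • unitVec d k) : ℝ) / n := by
        funext n
        show ((FmDef hp hTc hconn k n x : ℝ)) / n = _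
        rw [FmDef_eq hp h4 hTc hconn hheight hxH k n]
      rw [hfx]
      exact hsx
    have h1 := tendsto_integral_of_dominated_convergence (μ := μ)
      (F := fun (n : ℕ) x => (F n x : ℝ) / n) (f := fun _ => (1 : ℝ))
      (bound := fun _ => (1 : ℝ))
      (fun n => ((hFcastmeas n).div_const _).aestronglyMeasurable)
      (integrable_const 1)
      (fun n => Eventually.of_forall fun x => by
        rcases Nat.eq_zero_or_pos n with rfl | hn
        · have h0 : F 0 x = 0 := Nat.le_zero.mp (hFle 0 x)
          simp [h0]
        · have hn0 : (0 : ℝ) < n := by exact_mod_cast hn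
          rw [Real.norm_eq_abs, abs_of_nonneg (by positivity), div_le_one hn0]
          exact_mod_cast hFle n x)
      hlim
    simpa using h1
  -- integral invariance under shifts
  have hint_shift : ∀ m (v : Zd d),
      ∫ x, (F m (shiftZd d v x) : ℝ) ∂μ = ∫ x, (F m x : ℝ) ∂μ := by
    intro m v
    rw [← integral_map (hshift_meas v).aemeasurable
      (hFcastmeas m).aestronglyMeasurable, hinv v]
  -- the crucial a.e. identity F m = m
  have hkey : ∀ m : ℕ, ∀ᵐ x ∂μ, F m x = m := by
    intro m
    rcases Nat.eq_zero_or_pos m with rfl | hm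
    · exact Eventually.of_forall fun x => Nat.le_zero.mp (hFle 0 x)
    · have hIle : ∀ q : ℕ,
          ∫ x, (F (q * m) x : ℝ) ∂μ ≤ q * ∫ x, (F m x : ℝ) ∂μ := by
        intro q
        have hsub : ∀ᵐ x ∂μ, (F (q * m) x : ℝ)
            ≤ ∑ j ∈ Finset.range q,
              (F m (shiftZd d ((j * m) • unitVec d k) x) : ℝ) := by
          refine haeH.mono fun x hxH => ?_
          have := h_subadd hp h4 hTc hconn hheight hxH k m q
          exact_mod_cast this
        calc ∫ x, (F (q * m) x : ℝ) ∂μ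
            ≤ ∫ x, ∑ j ∈ Finset.range q,
                (F m (shiftZd d ((j * m) • unitVec d k) x) : ℝ) ∂μ :=
              integral_mono_ae (hFint0 _)
                (integrable_finset_sum _ fun j _ => hFint m _) hsub
          _ = ∑ j ∈ Finset.range q,
                ∫ x, (F m (shiftZd d ((j * m) • unitVec d k) x) : ℝ) ∂μ :=
              integral_finset_sum _ fun j _ => hFint m _
          _ = ∑ _j ∈ Finset.range q, ∫ x, (F m x : ℝ) ∂μ :=
              Finset.sum_congr rfl fun j _ => hint_shift m _
          _ = q * ∫ x, (F m x : ℝ) ∂μ := by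
              rw [Finset.sum_const, Finset.card_range, nsmul_eq_mul]
      have hmul : Tendsto (fun q : ℕ => q * m) atTop atTop :=
        Filter.tendsto_atTop_atTop.mpr fun b =>
          ⟨b, fun a ha => le_trans ha (Nat.le_mul_of_pos_right a hm)⟩
      have hcomp : Tendsto
          (fun q : ℕ => ∫ x, ((F (q * m) x : ℝ) / ((q * m : ℕ) : ℝ)) ∂μ)
          atTop (nhds 1) := hDCT.comp hmul
      have hm0 : (0 : ℝ) < m := by exact_mod_cast hm
      have hle1 : (1 : ℝ) ≤ (∫ x, (F m x : ℝ) ∂μ) / m := by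
        refine le_of_tendsto hcomp (eventually_atTop.mpr ⟨1, fun q hq => ?_⟩)
        have hq0 : (0 : ℝ) < q := by exact_mod_cast hq
        rw [integral_div]
        have hcast : ((q * m : ℕ) : ℝ) = (q : ℝ) * m := by push_cast; ring
        rw [hcast, div_le_div_iff₀ (by positivity) hm0]
        have hq' := hIle q
        nlinarith [hIle q]
      have hge : (m : ℝ) ≤ ∫ x, (F m x : ℝ) ∂μ := by
        calc (m : ℝ) = 1 * m := (one_mul _).symm
          _ ≤ ((∫ x, (F m x : ℝ) ∂μ) / m) * m :=
              mul_le_mul_of_nonneg_right hle1 hm0.le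
          _ = ∫ x, (F m x : ℝ) ∂μ := div_mul_cancel₀ _ hm0.ne'
      have hnneg : (0 : (Zd d → V) → ℝ) ≤ fun x => (m : ℝ) - F m x := by
        intro x
        have := hFle m x
        have : (F m x : ℝ) ≤ m := by exact_mod_cast this
        simp only [Pi.zero_apply]
        linarith
      have hgint : Integrable (fun x => (m : ℝ) - F m x) μ :=
        (integrable_const _).sub (hFint0 m)
      have hle' : ∫ x, (F m x : ℝ) ∂μ ≤ m := by
        calc ∫ x, (F m x : ℝ) ∂μ
            ≤ ∫ _x, (m : ℝ) ∂μ :=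
              integral_mono_ae (hFint0 m) (integrable_const _)
                (Eventually.of_forall fun x => by
                  show (F m x : ℝ) ≤ (m : ℝ)
                  exact_mod_cast hFle m x)
          _ = m := by simp
      have hz : ∫ x, ((m : ℝ) - F m x) ∂μ = 0 := by
        rw [integral_sub (integrable_const _) (hFint0 m), integral_const,
          probReal_univ]
        simp only [ENNReal.toReal_one, smul_eq_mul, one_mul]
        linarith
      have hae0 := (integral_eq_zero_iff_of_nonneg hnneg hgint).mp hz
      filter_upwards [hae0] with x hx
      simp only [Pi.zero_apply] at hx
      have : (F m x : ℝ) = m := by linarith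
      exact_mod_cast this
  -- transport along shifts and conclude
  have hkey_shift : ∀ (i : Zd d) (m : ℕ),
      ∀ᵐ x ∂μ, F m (shiftZd d i x) = m := by
    intro i m
    have hs : MeasurableSet {y : Zd d → V | F m y = m} :=
      hFmeas m (measurableSet_singleton m)
    have h1 : ∀ᵐ y ∂(Measure.map (shiftZd d i) μ), F m y = m := by
      rw [hinv i]; exact hkey m
    exact (ae_map_iff (hshift_meas i).aemeasurable hs).mp h1
  have hall : ∀ᵐ x ∂μ, ∀ (i : Zd d) (m : ℕ), F m (shiftZd d i x) = m :=
    ae_all_iff.mpr fun i => ae_all_iff.mpr fun m => hkey_shift i m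
  refine (haeH.and hall).mono fun x hx i m => ?_
  obtain ⟨hxH, hfx⟩ := hx
  rw [h_shift_eq hp h4 hTc hconn hheight hxH k i m]
  exact hfx i m
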